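/- In a one-period finite market with no constraints: let S_0 ∈ ℝ^d and S_1 a random vector on a finite probability space. There exists a probability measure Q equivalent to P with E_Q[S_1] = S_0 if and only if S_0 ∈ ri(conv{S_1(ω) : ω ∈ Ω}). -/

import Mathlib

open Finset Pointwise RealInnerProductSpace

noncomputable section

abbrev E (d : ℕ) : Type := EuclideanSpace ℝ (Fin d)

variable {Ω : Type} [Fintype Ω] [DecidableEq Ω] [Nonempty Ω] {d : ℕ}

lemma mem_hull_iff (S₁ : Ω → E d) (x : E d) :
    x ∈ convexHull ℝ (Set.range S₁) ↔
      ∃ w : Ω → ℝ, (∀ ω, 0 ≤ w ω) ∧ (∑ ω, w ω = 1) ∧ ∑ ω, w ω • S₁ ω = x := by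
  constructor
  · intro hx
    rw [convexHull_range_eq_exists_affineCombination] at hx
    obtain ⟨s, w, hw0, hw1, hx⟩ := hx
    refine ⟨fun ω => if ω ∈ s then w ω else 0, fun ω => by dsimp only; split <;> [exact hw0 _ ‹_›; exact le_rfl], ?_, ?_⟩
    · rw [Finset.sum_ite_mem, Finset.univ_inter, hw1]
    · rw [← hx, affineCombination_eq_linear_combination s S₁ w hw1]
      rw [show (∑ ω, (if ω ∈ s then w ω else 0) • S₁ ω)
          = ∑ ω, (if ω ∈ s then w ω • S₁ ω else 0) from by
        refine Finset.sum_congr rfl fun ω _ => ?_; split <;> simp]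
      rw [Finset.sum_ite_mem, Finset.univ_inter]
  · rintro ⟨w, hw0, hw1, rfl⟩
    exact mem_convexHull_of_exists_fintype w S₁ hw0 hw1 (fun ω => Set.mem_range_self ω) rfl

set_option linter.unusedSectionVars false

/-- The linear map sending weights to the weighted sum. -/
def Tmap (S₁ : Ω → E d) : (Ω → ℝ) →ₗ[ℝ] E d where
  toFun c := ∑ ω, c ω • S₁ ω
  map_add' a b := by simp [add_smul, Finset.sum_add_distrib]
  map_smul' r a := by simp [smul_smul, Finset.smul_sum]

lemma Tmap_single (S₁ : Ω → E d) [DecidableEq Ω] (ω : Ω) :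
    Tmap S₁ (Pi.single ω 1) = S₁ ω := by
  simp only [Tmap, LinearMap.coe_mk, AddHom.coe_mk]
  rw [Finset.sum_eq_single ω]
  · simp
  · intro b _ hb; simp [Pi.single_apply, hb]
  · simp

/-- Every vector in the vector span is the weighted sum with weights summing to zero. -/
lemma exists_weights (S₁ : Ω → E d) {v : E d} (hv : v ∈ vectorSpan ℝ (Set.range S₁)) :
    ∃ δ : Ω → ℝ, ∑ ω, δ ω = 0 ∧ ∑ ω, δ ω • S₁ ω = v := by
  classical
  have : vectorSpan ℝ (Set.range S₁) ≤
      Submodule.map (Tmap S₁) (LinearMap.ker ((Finset.univ.sum (fun ω => LinearMap.proj ω)) :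
        (Ω → ℝ) →ₗ[ℝ] ℝ)) := by
    rw [vectorSpan_def, Submodule.span_le]
    rintro x hx
    obtain ⟨a, ⟨ω₁, rfl⟩, b, ⟨ω₂, rfl⟩, rfl⟩ := hx
    refine ⟨Pi.single ω₁ 1 - Pi.single ω₂ 1, ?_, ?_⟩
    · simp [LinearMap.mem_ker]
    · simp [map_sub, Tmap_single]
  obtain ⟨δ, hδ, hδv⟩ := this hv
  exact ⟨δ, by simpa [LinearMap.mem_ker] using hδ, hδv⟩

/-- A linear section choosing weights, needed for continuity/size control. -/
lemma exists_linear_section (S₁ : Ω → E d) :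
    ∃ g : vectorSpan ℝ (Set.range S₁) →ₗ[ℝ] (Ω → ℝ),
      (∀ v, ∑ ω, g v ω = 0) ∧ (∀ v, ∑ ω, g v ω • S₁ ω = (v : E d)) := by
  classical
  set V := vectorSpan ℝ (Set.range S₁)
  have : FiniteDimensional ℝ V := inferInstance
  let b := Module.finBasis ℝ V
  have hch : ∀ i, ∃ δ : Ω → ℝ, ∑ ω, δ ω = 0 ∧ ∑ ω, δ ω • S₁ ω = (b i : E d) :=
    fun i => exists_weights S₁ (b i).2
  let g : V →ₗ[ℝ] (Ω → ℝ) := b.constr ℝ (fun i => (hch i).choose)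
  let sumLM : (Ω → ℝ) →ₗ[ℝ] ℝ := Finset.univ.sum (fun ω => LinearMap.proj ω)
  have h1 : sumLM.comp g = 0 := by
    apply b.ext
    intro i
    simp only [LinearMap.comp_apply, LinearMap.zero_apply, g, Module.Basis.constr_basis]
    simpa [sumLM] using (hch i).choose_spec.1
  have h2 : (Tmap S₁).comp g = V.subtype := by
    apply b.ext
    intro i
    simp only [LinearMap.comp_apply, Submodule.subtype_apply, g, Module.Basis.constr_basis]
    exact (hch i).choose_spec.2
  refine ⟨g, fun v => ?_, fun v => ?_⟩
  · have := congrFun (congrArg DFunLike.coe h1) v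
    simpa [sumLM] using this
  · have := congrFun (congrArg DFunLike.coe h2) v
    simpa [Tmap] using this


/-- there is Q equivalent to P with E_Q[S_1] = S_0 iff
S_0 ∈ ri(conv{S_1(ω) : ω ∈ Ω}). -/
theorem one_period_emm_iff {Ω : Type} [Fintype Ω] [Nonempty Ω] {d : ℕ}
    (P : Ω → ℝ) (hP : ∀ ω, 0 < P ω) (hP1 : ∑ ω, P ω = 1)
    (S₀ : E d) (S₁ : Ω → E d) :
    (∃ Q : Ω → ℝ, (∀ ω, 0 < Q ω) ∧ (∑ ω, Q ω = 1) ∧ ∑ ω, Q ω • S₁ ω = S₀)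
      ↔ S₀ ∈ intrinsicInterior ℝ (convexHull ℝ (Set.range S₁)) := by
  classical
  set C := convexHull ℝ (Set.range S₁) with hC
  have hVS : (affineSpan ℝ C).direction = vectorSpan ℝ (Set.range S₁) := by
    rw [hC, affineSpan_convexHull, direction_affineSpan]
  constructor
  · rintro ⟨Q, hQ, hQ1, hQS⟩
    have hS₀C : S₀ ∈ C := (mem_hull_iff S₁ S₀).2 ⟨Q, fun ω => (hQ ω).le, hQ1, hQS⟩
    have hS₀A : S₀ ∈ affineSpan ℝ C := subset_affineSpan ℝ C hS₀C
    obtain ⟨g, hg0, hgT⟩ := exists_linear_section S₁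
    have hgc : Continuous g := g.continuous_of_finiteDimensional
    -- minimum of Q
    obtain ⟨m, hm, hmQ⟩ : ∃ m : ℝ, 0 < m ∧ ∀ ω, m ≤ Q ω := by
      refine ⟨Finset.univ.inf' Finset.univ_nonempty Q, ?_, fun ω => Finset.inf'_le _ (by simp)⟩
      exact (Finset.lt_inf'_iff _).2 fun ω _ => hQ ω
    -- continuity at 0 gives ε
    obtain ⟨ε, hε, hεg⟩ : ∃ ε > 0, ∀ v : vectorSpan ℝ (Set.range S₁), ‖v‖ < ε → ‖g v‖ < m := by
      have := Metric.continuousAt_iff.1 (hgc.continuousAt (x := 0))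
      obtain ⟨δ, hδ, hδ'⟩ := this m hm
      refine ⟨δ, hδ, fun v hv => ?_⟩
      have := hδ' (x := v) (by simpa [dist_zero_right] using hv)
      simpa [dist_zero_right] using this
    refine ⟨⟨S₀, hS₀A⟩, ?_, rfl⟩
    rw [mem_interior_iff_mem_nhds, Metric.mem_nhds_iff]
    refine ⟨ε, hε, ?_⟩
    rintro y hy
    have hyA : (y : E d) ∈ affineSpan ℝ C := y.2
    have hv : (y : E d) - S₀ ∈ vectorSpan ℝ (Set.range S₁) := by
      rw [← hVS]
      exact AffineSubspace.vsub_mem_direction hyA hS₀A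
    have hvn : ‖(⟨(y : E d) - S₀, hv⟩ : vectorSpan ℝ (Set.range S₁))‖ < ε := by
      have : dist (y : E d) S₀ < ε := by
        simpa [Subtype.dist_eq] using (Metric.mem_ball.1 hy)
      simpa [dist_eq_norm] using this
    set δ : Ω → ℝ := g ⟨(y : E d) - S₀, hv⟩ with hδdef
    have hδm : ‖δ‖ < m := hεg _ hvn
    show (y : E d) ∈ C
    refine (mem_hull_iff S₁ _).2 ⟨fun ω => Q ω + δ ω, fun ω => ?_, ?_, ?_⟩
    · show 0 ≤ Q ω + δ ω
      have h : |δ ω| < m := lt_of_le_of_lt (by simpa using norm_le_pi_norm δ ω) hδm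
      have := (abs_le.1 h.le).1
      linarith [hmQ ω]
    · rw [Finset.sum_add_distrib, hQ1, hg0]; ring
    · have h1 : ∑ ω, (Q ω + δ ω) • S₁ ω = (∑ ω, Q ω • S₁ ω) + ∑ ω, δ ω • S₁ ω := by
        simp [add_smul, Finset.sum_add_distrib]
      rw [h1, hQS, hgT]
      module
  · rintro ⟨y, hy, rfl⟩
    set n : ℝ := (Fintype.card Ω : ℝ) with hn
    have hnpos : 0 < n := by positivity
    set b : E d := ∑ ω, (n⁻¹ : ℝ) • S₁ ω with hb
    have hbC : b ∈ C := (mem_hull_iff S₁ b).2 ⟨fun _ => n⁻¹, fun _ => by positivity, by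
      rw [Finset.sum_const, Finset.card_univ, nsmul_eq_mul, ← hn, mul_inv_cancel₀ hnpos.ne'], rfl⟩
    have hbA : b ∈ affineSpan ℝ C := subset_affineSpan ℝ C hbC
    have hyA : ((y : E d)) ∈ affineSpan ℝ C := y.2
    -- the curve t ↦ y + t • (y - b) inside the affine span
    have hmem : ∀ t : ℝ, (y : E d) + t • ((y : E d) - b) ∈ affineSpan ℝ C := by
      intro t
      have hd : t • ((y : E d) - b) ∈ (affineSpan ℝ C).direction :=
        Submodule.smul_mem _ t (AffineSubspace.vsub_mem_direction hyA hbA)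
      have := AffineSubspace.vadd_mem_of_mem_direction hd hyA
      simpa [add_comm] using this
    set c : ℝ → affineSpan ℝ C := fun t => ⟨(y : E d) + t • ((y : E d) - b), hmem t⟩ with hcdef
    have hcc : Continuous c := by
      apply Continuous.subtype_mk
      exact continuous_const.add (continuous_id.smul continuous_const)
    have hc0 : c 0 = y := by simp [hcdef]
    have hopen : IsOpen (c ⁻¹' interior ((↑) ⁻¹' C : Set (affineSpan ℝ C))) :=
      isOpen_interior.preimage hcc
    have h0mem : (0 : ℝ) ∈ c ⁻¹' interior ((↑) ⁻¹' C : Set (affineSpan ℝ C)) := by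
      simp [Set.mem_preimage, hc0, hy]
    obtain ⟨ε, hε, hball⟩ := Metric.isOpen_iff.1 hopen 0 h0mem
    set t : ℝ := ε / 2 with ht
    have htpos : 0 < t := by positivity
    have htmem : c t ∈ interior ((↑) ⁻¹' C : Set (affineSpan ℝ C)) := by
      apply hball
      have : dist t 0 < ε := by rw [Real.dist_eq, sub_zero, abs_of_pos htpos]; linarith
      exact this
    have hzC' := interior_subset htmem
    have hzC : ((c t : affineSpan ℝ C) : E d) ∈ C := hzC'
    obtain ⟨μ, hμ0, hμ1, hμS'⟩ := (mem_hull_iff S₁ _).1 hzC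
    have hμS : ∑ ω, μ ω • S₁ ω = (y : E d) + t • ((y : E d) - b) := hμS'
    have h1t : (0:ℝ) < 1 + t := by linarith
    refine ⟨fun ω => (1 + t)⁻¹ * μ ω + (t / (1 + t)) * n⁻¹, fun ω => ?_, ?_, ?_⟩
    · have := hμ0 ω
      have : 0 ≤ (1 + t)⁻¹ * μ ω := by positivity
      have h2 : 0 < (t / (1 + t)) * n⁻¹ := by positivity
      linarith
    · rw [Finset.sum_add_distrib, ← Finset.mul_sum, hμ1, ← Finset.sum_mul]
      simp only [Finset.sum_const, Finset.card_univ, nsmul_eq_mul, ← hn]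
      field_simp
    · have hsplit : ∑ ω, ((1 + t)⁻¹ * μ ω + t / (1 + t) * n⁻¹) • S₁ ω
          = (1 + t)⁻¹ • (∑ ω, μ ω • S₁ ω) + (t / (1 + t)) • ∑ ω, (n⁻¹ : ℝ) • S₁ ω := by
        rw [Finset.smul_sum, Finset.smul_sum, ← Finset.sum_add_distrib]
        refine Finset.sum_congr rfl fun ω _ => ?_
        rw [add_smul, smul_smul, smul_smul]
      rw [hsplit, hμS, ← hb]
      match_scalars <;> field_simp <;> ring
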